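/- Let G be a vertex-minimal graph admitting no odd 4-coloring. Then every 3-vertex of G has a neighbor of even degree at least 4. -/

import Mathlib

/-- An odd coloring of a graph: a proper coloring such that every non-isolated vertex
has some color appearing an odd number of times in its neighborhood. -/
def IsOddColoring {V α : Type*} (G : SimpleGraph V) (φ : V → α) : Prop :=
  (∀ u v : V, G.Adj u v → φ u ≠ φ v) ∧
  ∀ v : V, (∃ u, G.Adj v u) → ∃ c : α, Odd {u : V | G.Adj v u ∧ φ u = c}.ncard

lemma exists_notmem (B : Finset (Fin 4)) (h : B.card < 4) : ∃ c, c ∉ B := by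
  by_contra hc; push_neg at hc
  have h2 := Finset.card_le_card (fun c _ => hc c : (Finset.univ : Finset (Fin 4)) ⊆ B)
  simp at h2; omega

lemma exists_two_notmem (B : Finset (Fin 4)) (h : B.card ≤ 2) : ∃ c d, c ≠ d ∧ c ∉ B ∧ d ∉ B := by
  obtain ⟨c, hc⟩ := exists_notmem B (by omega)
  obtain ⟨d, hd⟩ := exists_notmem (insert c B)
    (by have := Finset.card_insert_le c B; omega)
  refine ⟨c, d, fun h => hd (h ▸ Finset.mem_insert_self c B), hc,
    fun hdB => hd (Finset.mem_insert_of_mem hdB)⟩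

lemma exists_odd_fiber {V : Type} [Fintype V] (G : SimpleGraph V) (φ : V → Fin 4) (v : V)
    (h : Odd (G.neighborSet v).ncard) :
    ∃ c : Fin 4, Odd {u : V | G.Adj v u ∧ φ u = c}.ncard := by
  classical
  by_contra hc
  push_neg at hc
  simp only [Nat.not_odd_iff_even] at hc
  have hset : ∀ c : Fin 4, {u : V | G.Adj v u ∧ φ u = c} =
      ↑((G.neighborFinset v).filter (fun u => φ u = c)) := by
    intro c; ext u; simp [SimpleGraph.mem_neighborFinset]
  have key : (G.neighborSet v).ncard = ∑ c : Fin 4,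
      {u : V | G.Adj v u ∧ φ u = c}.ncard := by
    have h1 : (G.neighborSet v).ncard = (G.neighborFinset v).card := by
      rw [← Set.ncard_coe_finset]; congr 1; simp [SimpleGraph.neighborFinset_def]
    rw [h1, Finset.card_eq_sum_card_fiberwise (f := φ) (t := Finset.univ)
      (fun x _ => Finset.mem_univ _)]
    refine Finset.sum_congr rfl fun c _ => ?_
    rw [hset c, Set.ncard_coe_finset]
  rw [key] at h
  have : Even (∑ c : Fin 4, {u : V | G.Adj v u ∧ φ u = c}.ncard) :=
    Finset.even_sum (f := fun c => {u : V | G.Adj v u ∧ φ u = c}.ncard) (fun c _ => hc c)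
  exact (Nat.not_odd_iff_even.2 this) h

/-- In a vertex-minimal graph admitting no odd 4-coloring, every vertex
of degree 3 has a neighbor of even degree at least 4. -/
theorem minimal_no_odd4_three_vertex_has_even_big_neighbor
    {V : Type} [Fintype V] (G : SimpleGraph V)
    (hno : ¬ ∃ φ : V → Fin 4, IsOddColoring G φ)
    (hmin : ∀ (W : Type) [Fintype W] (H : SimpleGraph W),
      Fintype.card W < Fintype.card V → ∃ φ : W → Fin 4, IsOddColoring H φ) :
    ∀ v : V, (G.neighborSet v).ncard = 3 →
      ∃ u : V, G.Adj v u ∧ Even (G.neighborSet u).ncard ∧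
        4 ≤ (G.neighborSet u).ncard := by
  classical
  intro v hv3
  by_contra hcon
  push_neg at hcon
  have hnb : ∀ u, G.Adj v u → (G.neighborSet u).ncard = 2 ∨ Odd (G.neighborSet u).ncard := by
    intro u hu
    rcases Nat.even_or_odd ((G.neighborSet u).ncard) with he | ho
    · left
      have h4 : (G.neighborSet u).ncard < 4 := hcon u hu he
      have h1 : 0 < (G.neighborSet u).ncard :=
        (Set.ncard_pos (Set.toFinite _)).mpr ⟨v, hu.symm⟩
      have := Nat.even_iff.mp he
      omega
    · right; exact ho
  set D : Set V := {w | G.Adj v w ∧ (G.neighborSet w).ncard = 2} with hD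
  have hvD : v ∉ D := fun h => G.loopless.irrefl v h.1
  set S : Set V := insert v D with hS
  have hvS : v ∈ S := Set.mem_insert _ _
  have hDS : ∀ w, w ∈ D → w ∈ S := fun w h => Set.mem_insert_of_mem _ h
  have hwv : ∀ w ∈ D, w ≠ v := fun w hw h => hvD (h ▸ hw)
  -- the second neighbor of each degree-2 neighbor of v
  have hxwex : ∀ w ∈ D, ∃ x, x ≠ v ∧ x ≠ w ∧ G.Adj w x ∧ G.neighborSet w = {v, x} := by
    intro w hw
    obtain ⟨hadj, h2⟩ := hw
    obtain ⟨p, q, hpq, hpqset⟩ := Set.ncard_eq_two.mp h2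
    have hv : v ∈ G.neighborSet w := hadj.symm
    rw [hpqset] at hv
    rcases hv with rfl | hv
    · refine ⟨q, hpq.symm, ?_, ?_, hpqset⟩
      · intro h
        have : q ∈ G.neighborSet w := by rw [hpqset]; right; rfl
        exact G.loopless.irrefl w (h ▸ this)
      · have : q ∈ G.neighborSet w := by rw [hpqset]; right; rfl
        exact this
    · rcases hv with rfl
      refine ⟨p, hpq, ?_, ?_, by rw [hpqset, Set.pair_comm]⟩
      · intro h
        have : p ∈ G.neighborSet w := by rw [hpqset]; left; rfl
        exact G.loopless.irrefl w (h ▸ this)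
      · have : p ∈ G.neighborSet w := by rw [hpqset]; left; rfl
        exact this
  have hDodd : ∀ z, G.Adj v z → z ∉ D → Odd (G.neighborSet z).ncard := by
    intro z h1 h2
    rcases hnb z h1 with h | h
    · exact absurd ⟨h1, h⟩ h2
    · exact h
  have hDadj : ∀ w ∈ D, G.Adj v w := fun w hw => hw.1
  have hD2 : ∀ z, G.Adj v z → (G.neighborSet z).ncard = 2 → z ∈ D :=
    fun z h1 h2 => ⟨h1, h2⟩
  clear_value D S
  clear hD
  choose! xw hxv hxne hxadj hxset using hxwex
  -- apply minimality to the induced subgraph on Sᶜ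
  haveI : Fintype ↥(Sᶜ) := Fintype.ofFinite _
  have hcard : Fintype.card ↥(Sᶜ) < Fintype.card V := by
    apply Fintype.card_lt_of_injective_of_notMem (Subtype.val) Subtype.val_injective (b := v)
    rintro ⟨⟨y, hy⟩, rfl⟩
    exact hy hvS
  obtain ⟨φ₀, hprop₀, hodd₀⟩ := hmin ↥(Sᶜ) (G.induce Sᶜ) hcard
  set φ' : V → Fin 4 := fun y => if h : y ∈ Sᶜ then φ₀ ⟨y, h⟩ else 0 with hφ'
  have hφ'eq : ∀ (y : V) (h : y ∉ S), φ' y = φ₀ ⟨y, h⟩ := fun y h => dif_pos h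
  set A : V → Fin 4 → Set V := fun x c => {z | G.Adj x z ∧ z ∉ S ∧ φ' z = c} with hA
  -- the color of v
  have hdeg3 : (G.neighborFinset v).card = 3 := by
    have : ((G.neighborFinset v : Finset V) : Set V) = G.neighborSet v := by ext; simp
    rw [← Set.ncard_coe_finset, this, hv3]
  set T : Finset V := ((G.neighborFinset v).filter (fun z => z ∉ D)) ∪
      (((G.neighborFinset v).filter (fun z => z ∈ D)).image xw) with hT
  have hTcard : T.card ≤ 3 := by
    calc T.card ≤ ((G.neighborFinset v).filter (fun z => z ∉ D)).card
        + (((G.neighborFinset v).filter (fun z => z ∈ D)).image xw).card :=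
          Finset.card_union_le _ _
      _ ≤ ((G.neighborFinset v).filter (fun z => z ∉ D)).card
        + ((G.neighborFinset v).filter (fun z => z ∈ D)).card :=
          Nat.add_le_add_left Finset.card_image_le _
      _ = 3 := by
          rw [add_comm, Finset.card_filter_add_card_filter_not (p := fun z => z ∈ D),
            hdeg3]
  obtain ⟨cu, hcu⟩ := exists_notmem (T.image φ')
    (lt_of_le_of_lt (Finset.card_image_le.trans hTcard) (by norm_num))
  -- choice of colors for deleted degree-2 vertices
  set c0fun : V → Fin 4 := fun x => if h : ∃ c, Odd (A x c).ncard then h.choose else 0 with hc0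
  have hc0spec : ∀ x, (∃ c, Odd (A x c).ncard) → Odd (A x (c0fun x)).ncard := by
    intro x h
    simp only [hc0, dif_pos h]
    exact h.choose_spec
  have hdAex : ∀ x : V, ∃ d : Fin 4, d ≠ cu ∧ d ≠ φ' x ∧ d ≠ c0fun x := by
    intro x
    obtain ⟨d, hd⟩ := exists_notmem ({cu, φ' x, c0fun x} : Finset (Fin 4)) (by
      have h1 := Finset.card_insert_le cu ({φ' x, c0fun x} : Finset (Fin 4))
      have h2 := Finset.card_insert_le (φ' x) ({c0fun x} : Finset (Fin 4))
      simp only [Finset.card_singleton] at *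
      omega)
    simp only [Finset.mem_insert, Finset.mem_singleton, not_or] at hd
    exact ⟨d, hd.1, hd.2.1, hd.2.2⟩
  choose dA hdAcu hdAx hdAc0 using hdAex
  have hpairex : ∀ x : V, ∃ c d : Fin 4, (c ≠ d ∧ c ≠ cu ∧ c ≠ φ' x) ∧ (d ≠ cu ∧ d ≠ φ' x) := by
    intro x
    obtain ⟨c, d, h1, h2, h3⟩ := exists_two_notmem ({cu, φ' x} : Finset (Fin 4)) (by
      have h1 := Finset.card_insert_le cu ({φ' x} : Finset (Fin 4))
      simp only [Finset.card_singleton] at *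
      omega)
    simp only [Finset.mem_insert, Finset.mem_singleton, not_or] at h2 h3
    exact ⟨c, d, ⟨h1, h2.1, h2.2⟩, h3.1, h3.2⟩
  choose d1 d2 hd1 hd2 using hpairex
  obtain ⟨e1, e2, he12, he1, he2⟩ := exists_two_notmem ({cu} : Finset (Fin 4)) (by simp)
  simp only [Finset.mem_singleton] at he1 he2
  set ord : V → ℕ := fun y => ((Fintype.equivFin V) y : ℕ) with hord
  have hordinj : Function.Injective ord := fun a b h =>
    (Fintype.equivFin V).injective (Fin.val_injective h)
  set ψ : V → Fin 4 := fun w =>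
    if xw w ∈ D then (if ord w < ord (xw w) then e1 else e2)
    else if ∃ c, Odd (A (xw w) c).ncard then dA (xw w)
    else if (∀ w', G.Adj (xw w) w' → w' ∈ D → ord w ≤ ord w') then d1 (xw w) else d2 (xw w)
    with hψ
  set φF : V → Fin 4 := fun y => if y = v then cu else if y ∈ D then ψ y else φ' y with hφF
  have hφFv : φF v = cu := if_pos rfl
  have hφFD : ∀ w ∈ D, φF w = ψ w := by
    intro w hw
    simp only [hφF]
    rw [if_neg (hwv w hw), if_pos hw]
  have hφFH : ∀ y, y ∉ S → φF y = φ' y := by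
    intro y hy
    have h1 : y ≠ v := fun h => hy (h ▸ hvS)
    have h2 : y ∉ D := fun h => hy (hDS y h)
    simp only [hφF]
    rw [if_neg h1, if_neg h2]
  have hψcu : ∀ w, ψ w ≠ cu := by
    intro w
    simp only [hψ]
    split_ifs with h1 h2 h3 h4
    · exact he1
    · exact he2
    · exact hdAcu _
    · exact (hd1 _).2.1
    · exact (hd2 _).1
  have hψext : ∀ w, xw w ∉ D → ψ w ≠ φ' (xw w) := by
    intro w hw
    simp only [hψ]
    rw [if_neg hw]
    split_ifs with h2 h3
    · exact hdAx _
    · exact (hd1 _).2.2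
    · exact (hd2 _).2
  have hNw : ∀ w ∈ D, ∀ z, G.Adj w z ↔ (z = v ∨ z = xw w) := by
    intro w hw z
    constructor
    · intro h
      have hz : z ∈ G.neighborSet w := h
      rw [hxset w hw] at hz
      exact hz
    · rintro (rfl | rfl)
      · exact (hDadj w hw).symm
      · exact hxadj w hw
  have hxx : ∀ w ∈ D, xw w ∈ D → xw (xw w) = w := by
    intro w hw hw2
    have hadj : G.Adj (xw w) w := (hxadj w hw).symm
    rcases (hNw (xw w) hw2 w).mp hadj with h | h
    · exact absurd h (hwv w hw)
    · exact h.symm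
  have hTmem1 : ∀ z, G.Adj v z → z ∉ D → z ∈ T := by
    intro z h1 h2
    rw [hT]
    exact Finset.mem_union_left _
      (Finset.mem_filter.mpr ⟨(G.mem_neighborFinset v z).mpr h1, h2⟩)
  have hTmem2 : ∀ w ∈ D, xw w ∈ T := by
    intro w hw
    rw [hT]
    exact Finset.mem_union_right _ (Finset.mem_image_of_mem xw
      (Finset.mem_filter.mpr ⟨(G.mem_neighborFinset v w).mpr (hDadj w hw), hw⟩))
  have hcuT : ∀ z ∈ T, cu ≠ φ' z := by
    intro z hz h
    exact hcu (h ▸ Finset.mem_image_of_mem φ' hz)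
  have hprop' : ∀ y z, y ∉ S → z ∉ S → G.Adj y z → φ' y ≠ φ' z := by
    intro y z hy hz hadj
    rw [hφ'eq y hy, hφ'eq z hz]
    exact hprop₀ ⟨y, hy⟩ ⟨z, hz⟩ hadj
  have hnadjv : ∀ y, y ∉ S → Even ((G.neighborSet y).ncard) → ¬ G.Adj y v := by
    intro y hyS hev hadj
    rcases hnb y hadj.symm with h2 | ho
    · exact hyS (hDS y (hD2 y hadj.symm h2))
    · exact (Nat.not_odd_iff_even.mpr hev) ho
  -- properness of φF
  have hPROP : ∀ y z, G.Adj y z → φF y ≠ φF z := by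
    intro y z hadj
    have hyz : y ≠ z := hadj.ne
    by_cases hy : y = v
    · subst hy
      rw [hφFv]
      by_cases hz : z ∈ D
      · rw [hφFD z hz]
        exact fun h => hψcu z h.symm
      · have hzS : z ∉ S := by
          rw [hS]
          rintro (rfl | h)
          · exact G.loopless.irrefl z hadj
          · exact hz h
        rw [hφFH z hzS]
        exact hcuT z (hTmem1 z hadj hz)
    · by_cases hyD : y ∈ D
      · rw [hφFD y hyD]
        rcases (hNw y hyD z).mp hadj with rfl | rfl
        · rw [hφFv]
          exact hψcu y
        · by_cases hzD : xw y ∈ D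
          · rw [hφFD _ hzD]
            have hy1 : ψ y = if ord y < ord (xw y) then e1 else e2 := by
              simp only [hψ]
              rw [if_pos hzD]
            have hy2 : ψ (xw y) = if ord (xw y) < ord y then e1 else e2 := by
              simp only [hψ]
              rw [hxx y hyD hzD, if_pos hyD]
            have hne : ord y ≠ ord (xw y) := fun h => (hxne y hyD) (hordinj h.symm)
            rcases lt_or_gt_of_ne hne with h | h
            · rw [hy1, hy2, if_pos h, if_neg (by omega)]
              exact he12
            · rw [hy1, hy2, if_neg (by omega), if_pos h]
              exact fun hh => he12 hh.symm
          · have hzS : xw y ∉ S := by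
              rw [hS]
              rintro (h | h)
              · exact (hxv y hyD) h
              · exact hzD h
            rw [hφFH _ hzS]
            exact hψext y hzD
      · have hyS : y ∉ S := by
          rw [hS]
          rintro (h | h)
          · exact hy h
          · exact hyD h
        rw [hφFH y hyS]
        by_cases hz : z = v
        · subst hz
          rw [hφFv]
          exact fun h => (hcuT y (hTmem1 y hadj.symm hyD)) h.symm
        · by_cases hzD : z ∈ D
          · rw [hφFD z hzD]
            have hy' : y = xw z := by
              rcases (hNw z hzD y).mp hadj.symm with h | h
              · exact absurd h hy
              · exact h
            have hxzD : xw z ∉ D := hy' ▸ hyD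
            intro h
            exact (hψext z hxzD) (by rw [← hy', ← h])
          · have hzS : z ∉ S := by
              rw [hS]
              rintro (h | h)
              · exact hz h
              · exact hzD h
            rw [hφFH z hzS]
            exact hprop' y z hyS hzS hadj
  -- odd condition for φF
  have hODD : ∀ y, (∃ z, G.Adj y z) → ∃ c, Odd {z | G.Adj y z ∧ φF z = c}.ncard := by
    intro y hy
    rcases Nat.even_or_odd ((G.neighborSet y).ncard) with hev | hod
    swap
    · exact exists_odd_fiber G φF y hod
    by_cases hyv : y = v
    · subst hyv
      rw [hv3] at hev
      exact absurd hev (by decide)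
    by_cases hyD : y ∈ D
    · -- y has exactly two neighbors, v and xw y; the fiber of cu is {v}
      refine ⟨cu, ?_⟩
      have hset : {z | G.Adj y z ∧ φF z = cu} = {v} := by
        ext z
        simp only [Set.mem_setOf_eq, Set.mem_singleton_iff]
        constructor
        · rintro ⟨hadj, hc⟩
          rcases (hNw y hyD z).mp hadj with rfl | rfl
          · rfl
          · exfalso
            by_cases hxD : xw y ∈ D
            · exact hψcu (xw y) (by rw [← hφFD _ hxD]; exact hc)
            · have hxS : xw y ∉ S := by
                rw [hS]
                rintro (h | h)
                · exact (hxv y hyD) h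
                · exact hxD h
              exact hcuT (xw y) (hTmem2 y hyD) (by rw [← hφFH _ hxS]; exact hc.symm)
        · intro hz
          rw [hz]
          exact ⟨(hNw y hyD v).mpr (Or.inl rfl), hφFv⟩
      rw [hset, Set.ncard_singleton]
      exact odd_one
    have hyS : y ∉ S := by
      rw [hS]
      rintro (h | h)
      · exact hyv h
      · exact hyD h
    have hnadj : ¬ G.Adj y v := hnadjv y hyS hev
    have hWy : ∀ w, G.Adj y w → w ∈ D → xw w = y := by
      intro w hadj hwD
      rcases (hNw w hwD y).mp hadj.symm with h | h
      · exact absurd h hyv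
      · exact h.symm
    have hdecomp : ∀ c, {z | G.Adj y z ∧ φF z = c}
        = A y c ∪ {w | (G.Adj y w ∧ w ∈ D) ∧ ψ w = c} := by
      intro c
      ext z
      simp only [Set.mem_setOf_eq, Set.mem_union, hA]
      constructor
      · rintro ⟨hadj, hc⟩
        by_cases hzD : z ∈ D
        · right
          exact ⟨⟨hadj, hzD⟩, by rw [← hφFD z hzD]; exact hc⟩
        · left
          have hzv : z ≠ v := fun h => hnadj (h ▸ hadj)
          have hzS : z ∉ S := by
            rw [hS]
            rintro (h | h)
            · exact hzv h
            · exact hzD h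
          exact ⟨hadj, hzS, by rw [← hφFH z hzS]; exact hc⟩
      · rintro (⟨hadj, hzS, hc⟩ | ⟨⟨hadj, hzD⟩, hc⟩)
        · exact ⟨hadj, by rw [hφFH z hzS]; exact hc⟩
        · exact ⟨hadj, by rw [hφFD z hzD]; exact hc⟩
    have hcount : ∀ c, {z | G.Adj y z ∧ φF z = c}.ncard
        = (A y c).ncard + {w | (G.Adj y w ∧ w ∈ D) ∧ ψ w = c}.ncard := by
      intro c
      rw [hdecomp c]
      refine Set.ncard_union_eq ?_ (Set.toFinite _) (Set.toFinite _)
      rw [Set.disjoint_left]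
      rintro z ⟨_, hzS, _⟩ ⟨⟨_, hzD⟩, _⟩
      exact hzS (hDS z hzD)
    by_cases hE : ∃ c, Odd (A y c).ncard
    · refine ⟨c0fun y, ?_⟩
      rw [hcount]
      have hempty : {w | (G.Adj y w ∧ w ∈ D) ∧ ψ w = c0fun y} = ∅ := by
        ext w
        simp only [Set.mem_setOf_eq, Set.mem_empty_iff_false, iff_false, not_and]
        rintro ⟨hadj, hwD⟩ hc
        have hxwy : xw w = y := hWy w hadj hwD
        have hψw : ψ w = dA y := by
          simp only [hψ]
          rw [hxwy, if_neg hyD, if_pos hE]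
        rw [hψw] at hc
        exact hdAc0 y hc
      rw [hempty, Set.ncard_empty, Nat.add_zero]
      exact hc0spec y hE
    · have hEall : ∀ c, Even (A y c).ncard := by
        intro c
        rcases Nat.even_or_odd (A y c).ncard with h | h
        · exact h
        · exact absurd ⟨c, h⟩ hE
      have hWyne : ∃ w, G.Adj y w ∧ w ∈ D := by
        by_contra hno'
        push_neg at hno'
        obtain ⟨z, hz⟩ := hy
        have hzS : z ∉ S := by
          rw [hS]
          rintro (rfl | hzD)
          · exact hnadj hz
          · exact hno' z hz hzD
        obtain ⟨c, hc⟩ := hodd₀ ⟨y, hyS⟩ ⟨⟨z, hzS⟩, hz⟩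
        have htrans : {z' : ↥(Sᶜ) | (G.induce Sᶜ).Adj ⟨y, hyS⟩ z' ∧ φ₀ z' = c}.ncard
            = (A y c).ncard := by
          rw [← Set.ncard_image_of_injective _ (Subtype.val_injective)]
          congr 1
          ext z'
          simp only [Set.mem_image, Set.mem_setOf_eq, hA]
          constructor
          · rintro ⟨⟨w', hw'⟩, ⟨hadj', hcc⟩, rfl⟩
            exact ⟨hadj', hw', by rw [hφ'eq _ hw']; exact hcc⟩
          · rintro ⟨hadj', hzS', hcc⟩
            exact ⟨⟨z', hzS'⟩, ⟨hadj', by rw [← hφ'eq z' hzS']; exact hcc⟩, rfl⟩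
        rw [htrans] at hc
        exact (Nat.not_odd_iff_even.mpr (hEall c)) hc
      have hnoE : ¬ ∃ c, Odd (A y c).ncard := hE
      obtain ⟨m, hmW, hmin'⟩ := Set.exists_min_image {w | G.Adj y w ∧ w ∈ D} ord
        (Set.toFinite _) hWyne
      refine ⟨d1 y, ?_⟩
      rw [hcount]
      have hψm : ψ m = d1 y := by
        simp only [hψ]
        rw [hWy m hmW.1 hmW.2, if_neg hyD, if_neg hnoE, if_pos]
        intro w' hadj' hwD'
        exact hmin' w' ⟨hadj', hwD'⟩
      have hsingle : {w | (G.Adj y w ∧ w ∈ D) ∧ ψ w = d1 y} = {m} := by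
        ext w
        simp only [Set.mem_setOf_eq, Set.mem_singleton_iff]
        constructor
        · rintro ⟨hwW, hc⟩
          by_contra hwm
          have hψw : ψ w = d2 y := by
            simp only [hψ]
            rw [hWy w hwW.1 hwW.2, if_neg hyD, if_neg hnoE, if_neg]
            intro hall
            have h1 := hall m hmW.1 hmW.2
            have h2 := hmin' w hwW
            exact hwm (hordinj (Nat.le_antisymm h2 h1)).symm
          rw [hψw] at hc
          exact (hd1 y).1 (hc.symm)
        · rintro rfl
          exact ⟨hmW, hψm⟩
      rw [hsingle, Set.ncard_singleton]
      exact (hEall (d1 y)).add_one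
  exact hno ⟨φF, hPROP, hODD⟩
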